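/- Let V be a weighted digraph on N vertices such that spanning forests with exactly k trees exist. Then every minimal-weight spanning forest G with k trees has an 'ancestor' among the minimal-weight spanning forests with k+1 trees: that is, there exists a minimal-weight spanning (k+1)-forest F whose trees, after suitable numbering, satisfy T^F_i = T^G_i for i = 1,…,k-1, T^F_k ⊆ T^G_k, and the subgraph of G induced by the vertex set of T^F_{k+1} is a tree. -/

import Mathlib

open Relation

/-- The arc relation of a functional digraph: `F i = some j` means there is an arc `i → j`. -/
def Arc {V : Type*} (F : V → Option V) (i j : V) : Prop := F i = some j

/-- A directed forest: a functional digraph (out-degree ≤ 1) without directed circuits. -/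
def IsForest {V : Type*} (F : V → Option V) : Prop :=
  ∀ i, ¬ Relation.TransGen (Arc F) i i

/-- `j` is accessible from `i` by a directed walk. -/
def Reaches {V : Type*} (F : V → Option V) (i j : V) : Prop :=
  Relation.ReflTransGen (Arc F) i j

open Classical in
/-- The `D`-exchange of `F` by `G`: replace the outgoing arcs (in `F`) of vertices of `D`
by their outgoing arcs in `G`. -/
noncomputable def exchange {V : Type*} (D : Set V) (F G : V → Option V) : V → Option V :=
  fun i => if i ∈ D then G i else F i

/-- The set of vertices of the tree of the forest `F` with root `r`. -/
def treeSet {V : Type*} (F : V → Option V) (r : V) : Set V := {i | Reaches F i r}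

section Weighted

variable {V : Type*} [Fintype V] [DecidableEq V]

/-- A spanning forest of the digraph with arc relation `A`. -/
def IsSpanningForest (A : V → V → Prop) (F : V → Option V) : Prop :=
  IsForest F ∧ ∀ i j, F i = some j → A i j

/-- The number of trees (= roots) of a forest. -/
def numTrees (F : V → Option V) : ℕ :=
  (Finset.univ.filter (fun i => F i = none)).card

/-- The weight of a forest: the sum of the weights of its arcs. -/
noncomputable def weight (w : V → V → ℝ) (F : V → Option V) : ℝ :=
  ∑ i, (F i).elim 0 (w i)

/-- `F` is a minimal-weight (extreme) spanning forest with `k` trees. -/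
def ExtremeForest (A : V → V → Prop) (w : V → V → ℝ) (k : ℕ) (F : V → Option V) : Prop :=
  IsSpanningForest A F ∧ numTrees F = k ∧
    ∀ G, IsSpanningForest A G → numTrees G = k → weight w F ≤ weight w G

/-- `φ_k`: the minimum weight of a spanning forest with exactly `k` trees. -/
noncomputable def phi (A : V → V → Prop) (w : V → V → ℝ) (k : ℕ) : ℝ :=
  sInf (weight w '' {F | IsSpanningForest A F ∧ numTrees F = k})

end Weighted

/-- Arc relation of the subgraph induced by the set `S`. -/
def ArcOn {V : Type*} (F : V → Option V) (S : Set V) (i j : V) : Prop :=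
  F i = some j ∧ i ∈ S ∧ j ∈ S

/-- The subgraph of the forest `F` induced by `S` is a tree: all vertices of `S` reach a
common root inside `S`. -/
def IsTreeOn {V : Type*} (F : V → Option V) (S : Set V) : Prop :=
  ∃ r ∈ S, ∀ i ∈ S, Relation.ReflTransGen (ArcOn F S) i r

/-! ### Auxiliary lemmas -/

section Aux

variable {V : Type*}

lemma arc_functional {F : V → Option V} {i j j' : V} (h : Arc F i j) (h' : Arc F i j') :
    j = j' := by
  have h1 : F i = some j := h
  have h2 : F i = some j' := h'
  rw [h1] at h2
  exact Option.some.inj h2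

lemma reaches_root_eq {F : V → Option V} {i r : V} (h : Reaches F i r) (hi : F i = none) :
    i = r := by
  rcases Relation.ReflTransGen.cases_head h with h1 | ⟨c, hc, _⟩
  · exact h1
  · have hc' : F i = some c := hc
    rw [hi] at hc'
    exact absurd hc' (by simp)

lemma reaches_total {F : V → Option V} {i b c : V} (hb : Reaches F i b) (hc : Reaches F i c) :
    Reaches F b c ∨ Reaches F c b :=
  Relation.ReflTransGen.total_of_right_unique (fun _ _ _ h h' => arc_functional h h') hb hc

lemma unique_root {F : V → Option V} {i r r' : V} (hr : F r = none) (hr' : F r' = none)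
    (h : Reaches F i r) (h' : Reaches F i r') : r = r' := by
  rcases reaches_total h h' with t | t
  · exact reaches_root_eq t hr
  · exact (reaches_root_eq t hr').symm

lemma wf_arc [Finite V] {F : V → Option V} (hF : IsForest F) :
    WellFounded (fun x y : V => Relation.TransGen (Arc F) y x) := by
  haveI : IsTrans V (fun x y : V => Relation.TransGen (Arc F) y x) :=
    ⟨fun _ _ _ h1 h2 => h2.trans h1⟩
  haveI : IsIrrefl V (fun x y : V => Relation.TransGen (Arc F) y x) := ⟨fun a h => hF a h⟩
  exact Finite.wellFounded_of_trans_of_irrefl _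

lemma exists_root [Finite V] {F : V → Option V} (hF : IsForest F) (i : V) :
    ∃ r, Reaches F i r ∧ F r = none := by
  refine (wf_arc hF).induction (C := fun i => ∃ r, Reaches F i r ∧ F r = none) i ?_
  intro x IH
  cases h : F x with
  | none => exact ⟨x, Relation.ReflTransGen.refl, h⟩
  | some j =>
    obtain ⟨r, hr, hn⟩ := IH j (Relation.TransGen.single (show Arc F x j from h))
    exact ⟨r, Relation.ReflTransGen.head (show Arc F x j from h) hr, hn⟩

lemma no_cycle_combine {r : V → V → Prop} (S : Set V)
    (ha : ∀ i j, i ∉ S → r i j → j ∉ S)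
    (hb : ∀ x, ¬ Relation.TransGen (fun i j => r i j ∧ i ∈ S ∧ j ∈ S) x x)
    (hc : ∀ x, ¬ Relation.TransGen (fun i j => r i j ∧ i ∉ S ∧ j ∉ S) x x) :
    ∀ x, ¬ Relation.TransGen r x x := by
  have prop : ∀ x y, Relation.TransGen r x y → x ∉ S →
      Relation.TransGen (fun i j => r i j ∧ i ∉ S ∧ j ∉ S) x y ∧ y ∉ S := by
    intro x y h
    induction h with
    | single h1 =>
      exact fun hx => ⟨Relation.TransGen.single ⟨h1, hx, ha _ _ hx h1⟩, ha _ _ hx h1⟩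
    | tail h1 h2 ih =>
      intro hx
      obtain ⟨t, hmid⟩ := ih hx
      exact ⟨t.tail ⟨h2, hmid, ha _ _ hmid h2⟩, ha _ _ hmid h2⟩
  intro x hcyc
  by_cases hx : x ∈ S
  · have inS : ∀ y, Relation.TransGen r y x → y ∈ S →
        Relation.TransGen (fun i j => r i j ∧ i ∈ S ∧ j ∈ S) y x := by
      intro y h
      induction h using Relation.TransGen.head_induction_on with
      | single h1 => exact fun hy => Relation.TransGen.single ⟨h1, hy, hx⟩
      | @head p c h1 h2 ih =>
        intro hy
        have hcS : c ∈ S := by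
          by_contra hcn
          exact (prop _ _ h2 hcn).2 hx
        exact Relation.TransGen.head ⟨h1, hy, hcS⟩ (ih hcS)
    exact hb x (inS x hcyc hx)
  · exact hc x (prop x x hcyc hx).1

lemma mem_treeSet_self (F : V → Option V) (a : V) : a ∈ treeSet F a :=
  Relation.ReflTransGen.refl

lemma treeSet_fwd {F : V → Option V} {a i j : V} (ha : F a = none)
    (hi : i ∈ treeSet F a) (hij : F i = some j) : j ∈ treeSet F a := by
  rcases Relation.ReflTransGen.cases_head hi with h1 | ⟨c, hc, hcr⟩
  · subst h1
    rw [ha] at hij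
    exact absurd hij (by simp)
  · have : c = j := arc_functional hc (show Arc F i j from hij)
    subst this
    exact hcr

lemma treeSet_bwd {F : V → Option V} {a i j : V} (hij : F i = some j)
    (hj : j ∈ treeSet F a) : i ∈ treeSet F a :=
  Relation.ReflTransGen.head (show Arc F i j from hij) hj

lemma treeSet_root_eq {F : V → Option V} {a i : V} (hi : i ∈ treeSet F a) (h : F i = none) :
    i = a :=
  reaches_root_eq hi h

lemma walk_transfer {F G : V → Option V} {T : Set V}
    (hoff : ∀ i, i ∉ T → F i = G i)
    (hFbwd : ∀ i j, F i = some j → j ∈ T → i ∈ T) :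
    ∀ i x, Relation.ReflTransGen (Arc F) i x → i ∉ T → Relation.ReflTransGen (Arc G) i x := by
  intro i x h
  induction h using Relation.ReflTransGen.head_induction_on with
  | refl => exact fun _ => Relation.ReflTransGen.refl
  | @head p c h1 h2 ih =>
    intro hp
    have hc : c ∉ T := fun hcT => hp (hFbwd p c h1 hcT)
    have harc : G p = some c := (hoff p hp).symm.trans (show F p = some c from h1)
    exact Relation.ReflTransGen.head (show Arc G p c from harc) (ih hc)

lemma exit_exists [Finite V] {G : V → Option V} (hG : IsForest G) {T : Set V}
    (hnr : ∀ i ∈ T, G i ≠ none) :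
    ∀ i ∈ T, ∃ z, z ∈ T ∧ (∀ j, G z = some j → j ∉ T) ∧
      Relation.ReflTransGen (ArcOn G T) i z := by
  intro i
  refine (wf_arc hG).induction
    (C := fun i => i ∈ T → ∃ z, z ∈ T ∧ (∀ j, G z = some j → j ∉ T) ∧
      Relation.ReflTransGen (ArcOn G T) i z) i ?_
  intro x IH hxT
  cases h : G x with
  | none => exact absurd h (hnr x hxT)
  | some j =>
    by_cases hjT : j ∈ T
    · obtain ⟨z, hz1, hz2, hz3⟩ := IH j (Relation.TransGen.single (show Arc G x j from h)) hjT
      exact ⟨z, hz1, hz2, Relation.ReflTransGen.head ⟨h, hxT, hjT⟩ hz3⟩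
    · refine ⟨x, hxT, ?_, Relation.ReflTransGen.refl⟩
      intro j' hj'
      have : j = j' := by
        rw [h] at hj'
        exact Option.some.inj hj'
      exact this ▸ hjT

end Aux

section AuxFin

variable {V : Type*} [Fintype V] [DecidableEq V]

lemma numTrees_congr {f g : V → Option V} (h : ∀ i, f i = none ↔ g i = none) :
    numTrees f = numTrees g := by
  unfold numTrees
  congr 1
  exact Finset.filter_congr fun i _ => h i

lemma weight_exchange_add (w : V → V → ℝ) (D : Set V) (f g : V → Option V) :
    weight w (exchange D f g) + weight w (exchange D g f) = weight w f + weight w g := by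
  unfold weight
  rw [← Finset.sum_add_distrib, ← Finset.sum_add_distrib]
  refine Finset.sum_congr rfl fun i _ => ?_
  by_cases h : i ∈ D
  · simp [exchange, h, add_comm]
  · simp [exchange, h]

/-- The cleanup step: make an extreme `(k+1)`-forest agree with `G` outside the tree of `a`. -/
lemma cleanup {A : V → V → Prop} {w : V → V → ℝ} {k : ℕ}
    {G : V → Option V} (hG : ExtremeForest A w k G)
    {F2 : V → Option V} {a : V} (hF2 : ExtremeForest A w (k + 1) F2) (ha2 : F2 a = none)
    (hnr : ∀ i ∈ treeSet F2 a, G i ≠ none) :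
    ∃ F3, ExtremeForest A w (k + 1) F3 ∧ F3 a = none ∧
      (∀ i, i ∉ treeSet F3 a → F3 i = G i) ∧ (∀ i ∈ treeSet F3 a, G i ≠ none) ∧
      (∀ i ∈ treeSet F3 a, ∃ d ∈ treeSet F2 a, Reaches G i d) := by
  classical
  have hGf : IsForest G := hG.1.1
  have hGA : ∀ i j, G i = some j → A i j := hG.1.2
  have hGk : numTrees G = k := hG.2.1
  have hGmin := hG.2.2
  have hF2f : IsForest F2 := hF2.1.1
  have hF2A : ∀ i j, F2 i = some j → A i j := hF2.1.2
  have hF2k : numTrees F2 = k + 1 := hF2.2.1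
  have hF2min := hF2.2.2
  set T2 := treeSet F2 a with hT2def
  have hfwd : ∀ i j, i ∈ T2 → F2 i = some j → j ∈ T2 := fun i j hi hij => treeSet_fwd ha2 hi hij
  have hbwd : ∀ i j, F2 i = some j → j ∈ T2 → i ∈ T2 := fun i j hij hj => treeSet_bwd hij hj
  set F3 := exchange T2ᶜ F2 G with hF3def
  set M := exchange T2ᶜ G F2 with hMdef
  have hF3in : ∀ i ∈ T2, F3 i = F2 i := fun i hi => if_neg (fun h => h hi)
  have hF3out : ∀ i, i ∉ T2 → F3 i = G i := fun i hi => if_pos hi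
  have hMin : ∀ i ∈ T2, M i = G i := fun i hi => if_neg (fun h => h hi)
  have hMout : ∀ i, i ∉ T2 → M i = F2 i := fun i hi => if_pos hi
  have hGa : G a ≠ none := hnr a (mem_treeSet_self F2 a)
  -- F3 is a forest
  have hF3f : IsForest F3 := by
    intro x
    refine no_cycle_combine T2ᶜ ?_ ?_ ?_ x
    · intro i j hi hij
      have hiT : i ∈ T2 := not_not.mp hi
      have h' : F2 i = some j := (hF3in i hiT).symm.trans (show F3 i = some j from hij)
      exact fun hj => hj (hfwd i j hiT h')
    · intro y hy
      refine hGf y (Relation.TransGen.mono ?_ _ _ hy)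
      rintro p q ⟨hpq, hp, _⟩
      exact (hF3out p hp).symm.trans (show F3 p = some q from hpq)
    · intro y hy
      refine hF2f y (Relation.TransGen.mono ?_ _ _ hy)
      rintro p q ⟨hpq, hp, _⟩
      have hpT : p ∈ T2 := not_not.mp hp
      exact (hF3in p hpT).symm.trans (show F3 p = some q from hpq)
  -- M is a forest
  have hMf : IsForest M := by
    intro x
    refine no_cycle_combine T2 ?_ ?_ ?_ x
    · intro i j hi hij
      have h' : F2 i = some j := (hMout i hi).symm.trans (show M i = some j from hij)
      exact fun hj => hi (hbwd i j h' hj)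
    · intro y hy
      refine hGf y (Relation.TransGen.mono ?_ _ _ hy)
      rintro p q ⟨hpq, hp, _⟩
      exact (hMin p hp).symm.trans (show M p = some q from hpq)
    · intro y hy
      refine hF2f y (Relation.TransGen.mono ?_ _ _ hy)
      rintro p q ⟨hpq, hp, _⟩
      exact (hMout p hp).symm.trans (show M p = some q from hpq)
  -- spanning
  have hF3sp : IsSpanningForest A F3 := by
    refine ⟨hF3f, fun i j h => ?_⟩
    by_cases hiT : i ∈ T2
    · exact hF2A i j ((hF3in i hiT).symm.trans h)
    · exact hGA i j ((hF3out i hiT).symm.trans h)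
  have hMsp : IsSpanningForest A M := by
    refine ⟨hMf, fun i j h => ?_⟩
    by_cases hiT : i ∈ T2
    · exact hGA i j ((hMin i hiT).symm.trans h)
    · exact hF2A i j ((hMout i hiT).symm.trans h)
  -- numTrees
  have hF3root : ∀ i, F3 i = none ↔ (i = a ∨ G i = none) := by
    intro i
    by_cases hiT : i ∈ T2
    · rw [hF3in i hiT]
      constructor
      · intro h; exact Or.inl (treeSet_root_eq hiT h)
      · rintro (rfl | h)
        · exact ha2
        · exact absurd h (hnr i hiT)
    · rw [hF3out i hiT]
      constructor
      · exact fun h => Or.inr h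
      · rintro (rfl | h)
        · exact absurd (mem_treeSet_self F2 i) hiT
        · exact h
  have hF3k : numTrees F3 = k + 1 := by
    unfold numTrees
    have heq : (Finset.univ.filter fun i => F3 i = none)
        = insert a (Finset.univ.filter fun i => G i = none) := by
      ext i
      simp only [Finset.mem_filter, Finset.mem_insert, Finset.mem_univ, true_and]
      exact hF3root i
    rw [heq, Finset.card_insert_of_notMem (by simp [hGa])]
    have hk0 : (Finset.univ.filter fun i => G i = none).card = k := hGk
    rw [hk0]
  have hMroot : ∀ i, M i = none ↔ (F2 i = none ∧ i ≠ a) := by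
    intro i
    by_cases hiT : i ∈ T2
    · rw [hMin i hiT]
      constructor
      · intro h; exact absurd h (hnr i hiT)
      · rintro ⟨h, hne⟩; exact absurd (treeSet_root_eq hiT h) hne
    · rw [hMout i hiT]
      constructor
      · intro h
        exact ⟨h, fun hia => hiT (by rw [hia]; exact mem_treeSet_self F2 a)⟩
      · exact fun h => h.1
  have hMk : numTrees M = k := by
    unfold numTrees
    have heq : (Finset.univ.filter fun i => M i = none)
        = (Finset.univ.filter fun i => F2 i = none).erase a := by
      ext i
      simp only [Finset.mem_filter, Finset.mem_erase, Finset.mem_univ, true_and]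
      rw [hMroot i]
      tauto
    rw [heq, Finset.card_erase_of_mem (by simp [ha2])]
    have hk0 : (Finset.univ.filter fun i => F2 i = none).card = k + 1 := hF2k
    rw [hk0]
    omega
  -- weights
  have hsum : weight w F3 + weight w M = weight w F2 + weight w G :=
    weight_exchange_add w T2ᶜ F2 G
  have h1 : weight w F2 ≤ weight w F3 := hF2min F3 hF3sp hF3k
  have h2 : weight w G ≤ weight w M := hGmin M hMsp hMk
  have hW : weight w F3 = weight w F2 := by linarith
  have hF3ex : ExtremeForest A w (k + 1) F3 :=
    ⟨hF3sp, hF3k, fun G' hG' hn => by rw [hW]; exact hF2min G' hG' hn⟩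
  have hF3a : F3 a = none := (hF3in a (mem_treeSet_self F2 a)).trans ha2
  -- T2 is contained in treeSet F3 a
  have hT2sub : ∀ i ∈ T2, i ∈ treeSet F3 a := by
    intro i hi
    have hi' : Relation.ReflTransGen (Arc F2) i a := hi
    induction hi' using Relation.ReflTransGen.head_induction_on with
    | refl => exact mem_treeSet_self F3 a
    | @head p c h1 h2 ih =>
      have hpT : p ∈ T2 := Relation.ReflTransGen.head h1 h2
      have hcT : c ∈ T2 := h2
      exact Relation.ReflTransGen.head
        (show Arc F3 p c from (hF3in p hpT).trans (show F2 p = some c from h1)) (ih hcT)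
  have hoff3 : ∀ i, i ∉ treeSet F3 a → F3 i = G i :=
    fun i hi => hF3out i (fun hT => hi (hT2sub i hT))
  have hanc : ∀ i ∈ treeSet F3 a, ∃ d ∈ T2, Reaches G i d := by
    intro i hi
    have hi' : Relation.ReflTransGen (Arc F3) i a := hi
    clear hi
    induction hi' using Relation.ReflTransGen.head_induction_on with
    | refl => exact ⟨a, mem_treeSet_self F2 a, Relation.ReflTransGen.refl⟩
    | @head p c h1 h2 ih =>
      by_cases hpT : p ∈ T2
      · exact ⟨p, hpT, Relation.ReflTransGen.refl⟩
      · obtain ⟨d, hd, hr⟩ := ih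
        have harc : G p = some c := (hF3out p hpT).symm.trans (show F3 p = some c from h1)
        exact ⟨d, hd, Relation.ReflTransGen.head (show Arc G p c from harc) hr⟩
  have hnr3 : ∀ i ∈ treeSet F3 a, G i ≠ none := by
    intro i hi hnone
    obtain ⟨d, hd, hr⟩ := hanc i hi
    have : i = d := reaches_root_eq hr hnone
    subst this
    exact hnr i hd hnone
  exact ⟨F3, hF3ex, hF3a, hoff3, hnr3, hanc⟩

/-- The main induction: shrink the tree of `a` until the induced subgraph of `G` on it is
a tree. -/
lemma key {A : V → V → Prop} {w : V → V → ℝ} {k : ℕ}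
    {G : V → Option V} (hG : ExtremeForest A w k G) :
    ∀ n (F : V → Option V) (a : V), ExtremeForest A w (k + 1) F → F a = none →
      (∀ i, i ∉ treeSet F a → F i = G i) → (∀ i ∈ treeSet F a, G i ≠ none) →
      (treeSet F a).ncard ≤ n →
      ∃ F', ExtremeForest A w (k + 1) F' ∧
        ∃ x b, x ≠ b ∧ F' x = none ∧ F' b = none ∧ G x = none ∧
          treeSet F' x ⊂ treeSet G x ∧ IsTreeOn G (treeSet F' b) ∧
          ∀ r, F' r = none → r ≠ x → r ≠ b → G r = none ∧ treeSet F' r = treeSet G r := by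
  classical
  have hGf : IsForest G := hG.1.1
  have hGA : ∀ i j, G i = some j → A i j := hG.1.2
  have hGk : numTrees G = k := hG.2.1
  have hGmin := hG.2.2
  intro n
  induction n with
  | zero =>
    intro F a _ _ _ _ hcard
    have hpos : 0 < (treeSet F a).ncard := (Set.ncard_pos (Set.toFinite _)).mpr ⟨a, mem_treeSet_self F a⟩
    omega
  | succ n IH =>
    intro F a hF haF hoff hnr hcard
    have hFf : IsForest F := hF.1.1
    have hFA : ∀ i j, F i = some j → A i j := hF.1.2
    have hFk : numTrees F = k + 1 := hF.2.1
    have hFmin := hF.2.2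
    set T := treeSet F a with hTdef
    have hFbwd : ∀ i j, F i = some j → j ∈ T → i ∈ T := fun i j hij hj => treeSet_bwd hij hj
    have hFfwd : ∀ i j, i ∈ T → F i = some j → j ∈ T := fun i j hi hij => treeSet_fwd haF hi hij
    have hGbwd : ∀ i j, G i = some j → j ∈ T → i ∈ T := by
      intro i j hij hj
      by_contra hiT
      exact hiT (hFbwd i j ((hoff i hiT).trans hij) hj)
    have hGbwd_rtg : ∀ i x, Reaches G i x → x ∈ T → i ∈ T := by
      intro i x h
      induction h using Relation.ReflTransGen.head_induction_on with
      | refl => exact id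
      | @head p c h1 _ ih => exact fun hx => hGbwd p c h1 (ih hx)
    have exit := exit_exists hGf hnr
    by_cases hZ : ∀ z z', (z ∈ T ∧ ∀ j, G z = some j → j ∉ T) →
        (z' ∈ T ∧ ∀ j, G z' = some j → j ∉ T) → z = z'
    · -- the induced subgraph of G on T is a tree: we are done
      obtain ⟨za, hzaT, hzaE, hzaR⟩ := exit a (mem_treeSet_self F a)
      obtain ⟨y, hy⟩ : ∃ y, G za = some y := Option.ne_none_iff_exists'.mp (hnr za hzaT)
      obtain ⟨rs, hyrs, hrsnone⟩ := exists_root hGf y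
      have hreachT : ∀ i ∈ T, Reaches G i rs := by
        intro i hiT
        obtain ⟨z, hz1, hz2, hz3⟩ := exit i hiT
        have hzz : z = za := hZ z za ⟨hz1, hz2⟩ ⟨hzaT, hzaE⟩
        subst hzz
        have h1 : Reaches G i z := Relation.ReflTransGen.mono (fun p q h => h.1) _ _ hz3
        exact h1.trans (Relation.ReflTransGen.head (show Arc G z y from hy) hyrs)
      have hrsT : rs ∉ T := fun h => hnr rs h hrsnone
      have hFrs : F rs = none := (hoff rs hrsT).trans hrsnone
      have hane : rs ≠ a := fun h => hrsT (h ▸ mem_treeSet_self F a)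
      have hsub : treeSet F rs ⊆ treeSet G rs := by
        intro i hi
        have hiT : i ∉ T := fun hiT => hane (unique_root hFrs haF hi hiT)
        exact walk_transfer hoff hFbwd i rs hi hiT
      have hzaG : za ∈ treeSet G rs := hreachT za hzaT
      have hzaF : za ∉ treeSet F rs := fun h => hane (unique_root hFrs haF h hzaT)
      refine ⟨F, hF, rs, a, hane, hFrs, haF, hrsnone, ?_, ?_, ?_⟩
      · exact (Set.ssubset_iff_of_subset hsub).mpr ⟨za, hzaG, hzaF⟩
      · refine ⟨za, hzaT, ?_⟩
        intro i hiT
        obtain ⟨z, hz1, hz2, hz3⟩ := exit i hiT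
        have hzz : z = za := hZ z za ⟨hz1, hz2⟩ ⟨hzaT, hzaE⟩
        exact hzz ▸ hz3
      · intro r hr hrrs hra
        have hrT : r ∉ T := fun h => hra (treeSet_root_eq h hr)
        have hGr : G r = none := (hoff r hrT).symm.trans hr
        refine ⟨hGr, ?_⟩
        ext i
        constructor
        · intro hi
          have hiT : i ∉ T := fun hT => hra (unique_root hr haF hi hT)
          exact walk_transfer hoff hFbwd i r hi hiT
        · intro hi
          have hiT : i ∉ T := fun hT => hrrs (unique_root hGr hrsnone hi (hreachT i hT))
          exact walk_transfer (fun j hj => (hoff j hj).symm) hGbwd i r hi hiT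
    · -- at least two exits: perform an exchange to shrink the tree of `a`
      push_neg at hZ
      obtain ⟨z1, z2, hz1, hz2, hne⟩ := hZ
      obtain ⟨za, hzaT, hzaE, hzaR⟩ := exit a (mem_treeSet_self F a)
      obtain ⟨zb, hzbT, hzbE, hzbne⟩ :
          ∃ zb, zb ∈ T ∧ (∀ j, G zb = some j → j ∉ T) ∧ zb ≠ za := by
        by_cases h : z1 = za
        · exact ⟨z2, hz2.1, hz2.2, fun hh => hne (by rw [h, hh])⟩
        · exact ⟨z1, hz1.1, hz1.2, h⟩
      set Sa := {i | Reaches G i za} with hSadef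
      have haSa : a ∈ Sa := Relation.ReflTransGen.mono (fun p q h => h.1) _ _ hzaR
      have hSaT : Sa ⊆ T := fun i hi => hGbwd_rtg i za hi hzaT
      have hSaanc : ∀ i x, Reaches G i x → x ∈ Sa → i ∈ Sa := fun i x h hx => h.trans hx
      have hzbSa : zb ∉ Sa := by
        intro h
        rcases Relation.ReflTransGen.cases_head h with h1 | ⟨c, hc, hcr⟩
        · exact hzbne h1
        · exact hzbE c hc (hGbwd_rtg c za hcr hzaT)
      set W := {i | i ∈ T ∧ i ∉ Sa} with hWdef
      have hzbW : zb ∈ W := ⟨hzbT, hzbSa⟩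
      set F2 := exchange W F G with hF2def
      set L := exchange W G F with hLdef
      have hF2in : ∀ i ∈ W, F2 i = G i := fun i hi => if_pos hi
      have hF2out : ∀ i, i ∉ W → F2 i = F i := fun i hi => if_neg hi
      have hLin : ∀ i ∈ W, L i = F i := fun i hi => if_pos hi
      have hLout : ∀ i, i ∉ W → L i = G i := fun i hi => if_neg hi
      have hFW : ∀ i ∈ W, F i ≠ none :=
        fun i hi h => hi.2 ((treeSet_root_eq hi.1 h).symm ▸ haSa)
      -- F2 is a forest
      have hF2f : IsForest F2 := by
        intro x
        refine no_cycle_combine T ?_ ?_ ?_ x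
        · intro i j hi hij
          have hiW : i ∉ W := fun h => hi h.1
          have h' : F i = some j := (hF2out i hiW).symm.trans (show F2 i = some j from hij)
          exact fun hj => hi (hFbwd i j h' hj)
        · intro y hy
          refine no_cycle_combine Sa ?_ ?_ ?_ y hy
          · rintro p q hp ⟨hpq, hpT, _⟩
            have hpW : p ∈ W := ⟨hpT, hp⟩
            have h' : G p = some q := (hF2in p hpW).symm.trans (show F2 p = some q from hpq)
            exact fun hq =>
              hp (hSaanc p q (Relation.ReflTransGen.single (show Arc G p q from h')) hq)
          · intro u hu
            refine hFf u (Relation.TransGen.mono ?_ _ _ hu)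
            rintro p q ⟨⟨hpq, hpT, _⟩, hpS, _⟩
            have hpW : p ∉ W := fun h => h.2 hpS
            exact (hF2out p hpW).symm.trans (show F2 p = some q from hpq)
          · intro u hu
            refine hGf u (Relation.TransGen.mono ?_ _ _ hu)
            rintro p q ⟨⟨hpq, hpT, _⟩, hpS, _⟩
            have hpW : p ∈ W := ⟨hpT, hpS⟩
            exact (hF2in p hpW).symm.trans (show F2 p = some q from hpq)
        · intro u hu
          refine hFf u (Relation.TransGen.mono ?_ _ _ hu)
          rintro p q ⟨hpq, hpT, _⟩
          have hpW : p ∉ W := fun h => hpT h.1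
          exact (hF2out p hpW).symm.trans (show F2 p = some q from hpq)
      -- L is a forest
      have hLf : IsForest L := by
        intro x
        refine no_cycle_combine T ?_ ?_ ?_ x
        · intro i j hi hij
          have hiW : i ∉ W := fun h => hi h.1
          have h' : G i = some j := (hLout i hiW).symm.trans (show L i = some j from hij)
          exact fun hj => hi (hGbwd i j h' hj)
        · intro y hy
          refine no_cycle_combine W ?_ ?_ ?_ y hy
          · rintro p q hp ⟨hpq, hpT, hqT⟩
            have hpSa : p ∈ Sa := by
              by_contra h
              exact hp ⟨hpT, h⟩
            have h' : G p = some q := (hLout p hp).symm.trans (show L p = some q from hpq)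
            intro hqW
            rcases Relation.ReflTransGen.cases_head (show Reaches G p za from hpSa)
              with h1 | ⟨c, hc, hcr⟩
            · exact hzaE q (h1 ▸ h') hqT
            · have hcq : c = q := arc_functional hc (show Arc G p q from h')
              exact hqW.2 (hcq ▸ hcr)
          · intro u hu
            refine hFf u (Relation.TransGen.mono ?_ _ _ hu)
            rintro p q ⟨⟨hpq, _, _⟩, hpW, _⟩
            exact (hLin p hpW).symm.trans (show L p = some q from hpq)
          · intro u hu
            refine hGf u (Relation.TransGen.mono ?_ _ _ hu)
            rintro p q ⟨⟨hpq, _, _⟩, hpW, _⟩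
            exact (hLout p hpW).symm.trans (show L p = some q from hpq)
        · intro u hu
          refine hGf u (Relation.TransGen.mono ?_ _ _ hu)
          rintro p q ⟨hpq, hpT, _⟩
          have hpW : p ∉ W := fun h => hpT h.1
          exact (hLout p hpW).symm.trans (show L p = some q from hpq)
      -- spanning
      have hF2sp : IsSpanningForest A F2 := by
        refine ⟨hF2f, fun i j h => ?_⟩
        by_cases hiW : i ∈ W
        · exact hGA i j ((hF2in i hiW).symm.trans h)
        · exact hFA i j ((hF2out i hiW).symm.trans h)
      have hLsp : IsSpanningForest A L := by
        refine ⟨hLf, fun i j h => ?_⟩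
        by_cases hiW : i ∈ W
        · exact hFA i j ((hLin i hiW).symm.trans h)
        · exact hGA i j ((hLout i hiW).symm.trans h)
      -- numTrees
      have hiffF2 : ∀ i, F2 i = none ↔ F i = none := by
        intro i
        by_cases hiW : i ∈ W
        · rw [hF2in i hiW]
          constructor
          · intro h; exact absurd h (hnr i hiW.1)
          · intro h; exact absurd h (hFW i hiW)
        · rw [hF2out i hiW]
      have hiffL : ∀ i, L i = none ↔ G i = none := by
        intro i
        by_cases hiW : i ∈ W
        · rw [hLin i hiW]
          constructor
          · intro h; exact absurd h (hFW i hiW)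
          · intro h; exact absurd h (hnr i hiW.1)
        · rw [hLout i hiW]
      have hF2k : numTrees F2 = k + 1 := (numTrees_congr hiffF2).trans hFk
      have hLk : numTrees L = k := (numTrees_congr hiffL).trans hGk
      -- weights
      have hsum : weight w F2 + weight w L = weight w F + weight w G :=
        weight_exchange_add w W F G
      have h1 : weight w F ≤ weight w F2 := hFmin F2 hF2sp hF2k
      have h2 : weight w G ≤ weight w L := hGmin L hLsp hLk
      have hW2 : weight w F2 = weight w F := by linarith
      have hF2ex : ExtremeForest A w (k + 1) F2 :=
        ⟨hF2sp, hF2k, fun G' hG' hn => by rw [hW2]; exact hFmin G' hG' hn⟩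
      have haW : a ∉ W := fun h => h.2 haSa
      have hF2a : F2 a = none := (hF2out a haW).trans haF
      -- the tree of a in F2 is contained in Sa
      have hT2Sa : ∀ i, i ∈ treeSet F2 a → i ∈ Sa := by
        intro i hi
        have hi' : Relation.ReflTransGen (Arc F2) i a := hi
        clear hi
        induction hi' using Relation.ReflTransGen.head_induction_on with
        | refl => exact haSa
        | @head p c h1 _ ih =>
          have hcSa : c ∈ Sa := ih
          by_cases hpW : p ∈ W
          · have h' : G p = some c := (hF2in p hpW).symm.trans (show F2 p = some c from h1)
            exact absurd
              (hSaanc p c (Relation.ReflTransGen.single (show Arc G p c from h')) hcSa) hpW.2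
          · have h' : F p = some c := (hF2out p hpW).symm.trans (show F2 p = some c from h1)
            have hpT : p ∈ T := hFbwd p c h' (hSaT hcSa)
            by_contra hpSa
            exact hpW ⟨hpT, hpSa⟩
      have hnr2 : ∀ i ∈ treeSet F2 a, G i ≠ none := fun i hi => hnr i (hSaT (hT2Sa i hi))
      obtain ⟨F3, hF3ex, hF3a, hoff3, hnr3, hanc3⟩ := cleanup hG hF2ex hF2a hnr2
      have hT3 : treeSet F3 a ⊆ Sa := by
        intro i hi
        obtain ⟨d, hd, hr⟩ := hanc3 i hi
        exact hSaanc i d hr (hT2Sa d hd)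
      have hT3T : treeSet F3 a ⊂ T := by
        refine (Set.ssubset_iff_of_subset (fun i hi => hSaT (hT3 hi))).mpr
          ⟨zb, hzbT, fun h => hzbSa (hT3 h)⟩
      have hcard3 : (treeSet F3 a).ncard ≤ n := by
        have hlt : (treeSet F3 a).ncard < T.ncard := Set.ncard_lt_ncard hT3T (Set.toFinite T)
        omega
      exact IH F3 a hF3ex hF3a hoff3 hnr3 hcard3

end AuxFin

/-- Every minimal-weight spanning forest `G` with `k` trees has an ancestor among the
minimal-weight spanning forests with `k+1` trees: a forest `F` with two distinguished roots
`a`, `b`, such that all other trees of `F` coincide with trees of `G`, the tree of `F`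
rooted at `a` is properly contained in the tree of `G` rooted at `a`, and the subgraph of
`G` induced by the vertex set of the tree of `F` rooted at `b` is a tree. -/
theorem extreme_ancestor_exists {V : Type*} [Fintype V] [DecidableEq V]
    (A : V → V → Prop) (w : V → V → ℝ) (k : ℕ)
    (hk : 1 ≤ k) (hk' : k ≤ Fintype.card V - 1)
    (hEx : ∃ F, IsSpanningForest A F ∧ numTrees F = k)
    (G : V → Option V) (hG : ExtremeForest A w k G) :
    ∃ F, ExtremeForest A w (k + 1) F ∧
      ∃ a b, a ≠ b ∧ F a = none ∧ F b = none ∧ G a = none ∧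
        treeSet F a ⊂ treeSet G a ∧ IsTreeOn G (treeSet F b) ∧
        ∀ r, F r = none → r ≠ a → r ≠ b → G r = none ∧ treeSet F r = treeSet G r := by
  classical
  have hGk : numTrees G = k := hG.2.1
  have hcardV : k + 1 ≤ Fintype.card V := by omega
  -- G has at least one arc
  have hb : ∃ b, G b ≠ none := by
    by_contra h
    push_neg at h
    have hall : numTrees G = Fintype.card V := by
      unfold numTrees
      rw [Finset.filter_true_of_mem (fun i _ => h i)]
      exact Finset.card_univ
    rw [hGk] at hall
    omega
  obtain ⟨b, hbG⟩ := hb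
  obtain ⟨c, hc⟩ := Option.ne_none_iff_exists'.mp hbG
  -- delete the arc at b to get some spanning forest with k+1 trees
  set G1 : V → Option V := fun i => if i = b then none else G i with hG1def
  have hG1f : IsForest G1 := by
    intro x hx
    refine hG.1.1 x (Relation.TransGen.mono ?_ _ _ hx)
    intro p q h
    have h' : (if p = b then none else G p) = some q := h
    by_cases hpb : p = b
    · rw [if_pos hpb] at h'
      exact absurd h' (by simp)
    · rw [if_neg hpb] at h'
      exact h'
  have hG1sp : IsSpanningForest A G1 := by
    refine ⟨hG1f, fun i j h => ?_⟩
    have h' : (if i = b then none else G i) = some j := h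
    by_cases hib : i = b
    · rw [if_pos hib] at h'
      exact absurd h' (by simp)
    · rw [if_neg hib] at h'
      exact hG.1.2 i j h'
  have hG1k : numTrees G1 = k + 1 := by
    unfold numTrees
    have heq : (Finset.univ.filter fun i => G1 i = none)
        = insert b (Finset.univ.filter fun i => G i = none) := by
      ext i
      simp only [Finset.mem_filter, Finset.mem_insert, Finset.mem_univ, true_and, hG1def]
      by_cases hib : i = b
      · simp [hib]
      · simp [hib]
    rw [heq, Finset.card_insert_of_notMem (by simp [hc])]
    have hk0 : (Finset.univ.filter fun i => G i = none).card = k := hGk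
    rw [hk0]
  -- there is an extreme spanning forest with k+1 trees
  obtain ⟨H, hHex⟩ : ∃ H, ExtremeForest A w (k + 1) H := by
    have hfin : ({F : V → Option V | IsSpanningForest A F ∧ numTrees F = k + 1}).Finite :=
      Set.toFinite _
    have hne : ({F : V → Option V | IsSpanningForest A F ∧ numTrees F = k + 1}).Nonempty :=
      ⟨G1, hG1sp, hG1k⟩
    obtain ⟨H, hH, hmin⟩ := Set.exists_min_image _ (weight w) hfin hne
    exact ⟨H, hH.1, hH.2, fun G' h1 h2 => hmin G' ⟨h1, h2⟩⟩
  have hHf : IsForest H := hHex.1.1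
  -- pick a root of H whose tree contains no root of G
  have hroot := fun x => Classical.choose_spec (exists_root hHf x)
  set rootH : V → V := fun x => Classical.choose (exists_root hHf x) with hrootdef
  set RG : Finset V := Finset.univ.filter (fun i => G i = none) with hRGdef
  set RH : Finset V := Finset.univ.filter (fun i => H i = none) with hRHdef
  have hcRG : RG.card = k := hGk
  have hcRH : RH.card = k + 1 := hHex.2.1
  have hnsub : ¬ (RH ⊆ RG.image rootH) := by
    intro hsub
    have h1 := Finset.card_le_card hsub
    have h2 := Finset.card_image_le (s := RG) (f := rootH)
    omega
  rw [Finset.not_subset] at hnsub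
  obtain ⟨a0, ha0RH, ha0im⟩ := hnsub
  have ha0H : H a0 = none := (Finset.mem_filter.mp ha0RH).2
  have hnrH : ∀ i ∈ treeSet H a0, G i ≠ none := by
    intro i hi hGi
    apply ha0im
    have hiRG : i ∈ RG := Finset.mem_filter.mpr ⟨Finset.mem_univ i, hGi⟩
    have hra : rootH i = a0 := unique_root (hroot i).2 ha0H (hroot i).1 hi
    exact Finset.mem_image.mpr ⟨i, hiRG, hra⟩
  obtain ⟨F0, hF0ex, hF0a, hoff0, hnr0, _⟩ := cleanup hG hHex ha0H hnrH
  exact key hG (treeSet F0 a0).ncard F0 a0 hF0ex hF0a hoff0 hnr0 le_rfl
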